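/- Let K be a locally compact nonarchimedean valued field and 0 < r. If (f_n) is a sequence of power series over K, each converging on the open disk |x| < r, such that for every ρ < r the norms |f_n|_ρ = sup_k |a_{n,k}| ρ^k are bounded uniformly in n, then (f_n) admits a subsequence that converges (coefficient-wise and uniformly in the norm |·|_ρ for every ρ < r) to a power series converging on |x| < r. -/

import Mathlib

open scoped ENNReal
open Filter

/-- Lemme 6.1-2: over a locally compact nonarchimedean field, a sequence of power
series converging on the open disk `|x| < r` which is bounded in every norm
`|·|_ρ`, `ρ < r`, has a subsequence converging (coefficient-wise and in each norm
`|·|_ρ`) to a power series converging on `|x| < r`. -/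
theorem exists_subseq_tendsto_of_bounded {K : Type*} [NontriviallyNormedField K]
    [CompleteSpace K] [LocallyCompactSpace K] [IsUltrametricDist K]
    (r : ℝ) (hr : 0 < r) (a : ℕ → ℕ → K)
    (hconv : ∀ n : ℕ, ∀ ρ : ℝ, 0 < ρ → ρ < r →
      Tendsto (fun k => ‖a n k‖ * ρ ^ k) atTop (nhds 0))
    (hbdd : ∀ ρ : ℝ, 0 < ρ → ρ < r → ∃ C : ℝ, ∀ n k, ‖a n k‖ * ρ ^ k ≤ C) :
    ∃ φ : ℕ → ℕ, StrictMono φ ∧ ∃ b : ℕ → K,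
      (∀ ρ : ℝ, 0 < ρ → ρ < r →
        Tendsto (fun k => ‖b k‖ * ρ ^ k) atTop (nhds 0)) ∧
      (∀ k : ℕ, Tendsto (fun n => a (φ n) k) atTop (nhds (b k))) ∧
      (∀ ρ : ℝ, 0 < ρ → ρ < r →
        Tendsto (fun n => ⨆ k : ℕ, ENNReal.ofReal (‖a (φ n) k - b k‖ * ρ ^ k))
          atTop (nhds 0)) := by
  have : ProperSpace K := .of_locallyCompactSpace K
  -- extract a coefficient-wise convergent subsequence
  obtain ⟨C₀, hC₀⟩ := hbdd (r / 2) (by positivity) (by linarith)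
  set M : ℕ → ℝ := fun k => C₀ / (r / 2) ^ k with hM
  have hMb : ∀ n k, ‖a n k‖ ≤ M k := by
    intro n k
    rw [hM, le_div_iff₀ (by positivity)]
    exact hC₀ n k
  have hcomp : IsCompact (Set.pi Set.univ fun k : ℕ => Metric.closedBall (0 : K) (M k)) :=
    isCompact_univ_pi fun k => isCompact_closedBall 0 (M k)
  have hmem : ∀ n, (fun k => a n k) ∈ Set.pi Set.univ fun k => Metric.closedBall (0 : K) (M k) := by
    intro n k _
    simpa [Metric.mem_closedBall, dist_eq_norm] using hMb n k
  obtain ⟨b, -, φ, hφ, hb⟩ := hcomp.isSeqCompact hmem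
  have hbk : ∀ k, Tendsto (fun n => a (φ n) k) atTop (nhds (b k)) :=
    fun k => (tendsto_pi_nhds.1 hb) k
  -- norm of b bounded by same bounds
  have hbbd : ∀ ρ : ℝ, 0 < ρ → ρ < r → ∀ C : ℝ, (∀ n k, ‖a n k‖ * ρ ^ k ≤ C) →
      ∀ k, ‖b k‖ * ρ ^ k ≤ C := by
    intro ρ hρ hρr C hC k
    have : Tendsto (fun n => ‖a (φ n) k‖ * ρ ^ k) atTop (nhds (‖b k‖ * ρ ^ k)) :=
      ((hbk k).norm).mul_const _
    exact le_of_tendsto this (Eventually.of_forall fun n => hC (φ n) k)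
  -- key geometric estimate machinery
  have key : ∀ ρ : ℝ, 0 < ρ → ρ < r → ∃ C : ℝ, 0 ≤ C ∧
      ∃ q : ℝ, 0 ≤ q ∧ q < 1 ∧
        (∀ n k, ‖a n k - b k‖ * ρ ^ k ≤ C * q ^ k) ∧
        (∀ k, ‖b k‖ * ρ ^ k ≤ C * q ^ k) := by
    intro ρ hρ hρr
    set ρ' : ℝ := (ρ + r) / 2 with hρ'
    have hρ'0 : 0 < ρ' := by positivity
    have h1 : ρ < ρ' := by rw [hρ']; linarith
    have h2 : ρ' < r := by rw [hρ']; linarith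
    obtain ⟨C, hC⟩ := hbdd ρ' hρ'0 h2
    have hC0 : 0 ≤ C := le_trans (by positivity) (hC 0 0)
    refine ⟨C, hC0, ρ / ρ', by positivity, (div_lt_one hρ'0).2 h1, ?_, ?_⟩
    · intro n k
      have hub : ‖a n k - b k‖ ≤ max ‖a n k‖ ‖b k‖ := by
        rw [sub_eq_add_neg]
        simpa using IsUltrametricDist.norm_add_le_max (a n k) (-(b k))
      have h3 : ‖a n k - b k‖ * ρ' ^ k ≤ C := by
        rcases max_cases ‖a n k‖ ‖b k‖ with ⟨h, _⟩ | ⟨h, _⟩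
        · exact le_trans (mul_le_mul_of_nonneg_right (hub.trans h.le) (by positivity))
            (hC n k)
        · exact le_trans (mul_le_mul_of_nonneg_right (hub.trans h.le) (by positivity))
            (hbbd ρ' hρ'0 h2 C hC k)
      calc ‖a n k - b k‖ * ρ ^ k = (‖a n k - b k‖ * ρ' ^ k) * (ρ / ρ') ^ k := by
            rw [mul_assoc, ← mul_pow, mul_div_assoc', mul_div_cancel_left₀ _ hρ'0.ne']
        _ ≤ C * (ρ / ρ') ^ k := mul_le_mul_of_nonneg_right h3 (by positivity)
    · intro k
      calc ‖b k‖ * ρ ^ k = (‖b k‖ * ρ' ^ k) * (ρ / ρ') ^ k := by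
            rw [mul_assoc, ← mul_pow, mul_div_assoc', mul_div_cancel_left₀ _ hρ'0.ne']
        _ ≤ C * (ρ / ρ') ^ k :=
            mul_le_mul_of_nonneg_right (hbbd ρ' hρ'0 h2 C hC k) (by positivity)
  refine ⟨φ, hφ, b, ?_, hbk, ?_⟩
  · -- convergence of |b k| ρ^k to 0
    intro ρ hρ hρr
    obtain ⟨C, hC0, q, hq0, hq1, -, hbq⟩ := key ρ hρ hρr
    have hlim : Tendsto (fun k : ℕ => C * q ^ k) atTop (nhds 0) := by
      simpa using (tendsto_pow_atTop_nhds_zero_of_lt_one hq0 hq1).const_mul C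
    refine squeeze_zero (fun k => by positivity) hbq hlim
  · -- uniform convergence in the ρ-norm
    intro ρ hρ hρr
    obtain ⟨C, hC0, q, hq0, hq1, habq, -⟩ := key ρ hρ hρr
    rw [ENNReal.tendsto_nhds_zero]
    intro ε hε
    -- pick a real 0 < δ with ofReal δ ≤ ε
    obtain ⟨δ, hδ0, hδε⟩ : ∃ δ : ℝ, 0 < δ ∧ ENNReal.ofReal δ ≤ ε := by
      rcases eq_or_ne ε ⊤ with h | h
      · exact ⟨1, one_pos, by simp [h]⟩
      · refine ⟨ε.toReal, ENNReal.toReal_pos hε.ne' h, by rw [ENNReal.ofReal_toReal h]⟩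
    -- suffices: eventually ∀ k, bound ≤ δ
    have hev : ∀ᶠ n in atTop, ∀ k, ‖a (φ n) k - b k‖ * ρ ^ k ≤ δ := by
      have hlim : Tendsto (fun k : ℕ => C * q ^ k) atTop (nhds 0) := by
        simpa using (tendsto_pow_atTop_nhds_zero_of_lt_one hq0 hq1).const_mul C
      obtain ⟨N, hN⟩ := (hlim.eventually (eventually_le_nhds hδ0)).exists_forall_of_atTop
      -- finitely many small k
      have hsmall : ∀ k < N, ∀ᶠ n in atTop, ‖a (φ n) k - b k‖ * ρ ^ k ≤ δ := by
        intro k _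
        have : Tendsto (fun n => ‖a (φ n) k - b k‖ * ρ ^ k) atTop (nhds 0) := by
          simpa using (((hbk k).sub_const (b k)).norm).mul_const (ρ ^ k)
        exact this.eventually (eventually_le_nhds hδ0)
      have hall : ∀ᶠ n in atTop, ∀ k < N, ‖a (φ n) k - b k‖ * ρ ^ k ≤ δ :=
        (eventually_all_finite (Set.finite_Iio N)).2 fun k hk => hsmall k hk
      filter_upwards [hall] with n hn k
      rcases lt_or_ge k N with hk | hk
      · exact hn k hk
      · exact (habq (φ n) k).trans (hN k hk)
    filter_upwards [hev] with n hn
    refine iSup_le fun k => le_trans ?_ hδε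
    exact ENNReal.ofReal_le_ofReal (hn k)
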